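/- Let m ≥ 1 and B ≥ 1 be integers, let A be a finite set, and let s : A → ℕ satisfy s(a) ≥ 1 for all a ∈ A and Σ_{a∈A} s(a) = mB. Let Z be a finite set of variables equipped with maps p : Z → {1,…,m}, σ : Z → {0,1}, q : Z → A, and τ : Z → {0,1} such that for every i and every b ∈ {0,1} the set {z : p(z)=i, σ(z)=b} has exactly B elements, and for every a ∈ A and every b ∈ {0,1} the set {z : q(z)=a, τ(z)=b} has exactly s(a) elements. Let f and t be two distinct fresh variables not in Z. Define Boolean functions over Z ∪ {f,t} by S'(α) = ¬α(f) ∧ α(t) ∧ (α(z) ≠ α(z') whenever p(z) = p(z') and σ(z) ≠ σ(z')), and U'(α) = ¬α(f) ∧ α(t) ∧ (α(z) ≠ α(z') whenever q(z) = q(z') and τ(z) ≠ τ(z')). Then S' isomorphically implies U' if and only if there is a map c : A → {1,…,m} such that Σ_{a : c(a)=i} s(a) = B for every i ∈ {1,…,m}. -/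

import Mathlib

open Finset in
theorem stmt14_split_card {Z : Type*} [Fintype Z] (P : Z → Prop) [DecidablePred P] (σ : Z → Bool) :
    (univ.filter P).card
      = (univ.filter fun z => P z ∧ σ z = false).card + (univ.filter fun z => P z ∧ σ z = true).card := by
  classical
  rw [← Finset.filter_filter, ← Finset.filter_filter,
    show (filter (fun z => σ z = true) (filter P univ)) = filter (fun z => ¬ σ z = false) (filter P univ) from by simp]
  exact (Finset.card_filter_add_card_filter_not (p := fun z => σ z = false)).symm

open Finset in
theorem stmt14_fiber_card {Z A : Type*} [Fintype Z] [Fintype A] [DecidableEq A]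
    (q : Z → A) (Q : A → Prop) [DecidablePred Q] (R : Z → Prop) [DecidablePred R] :
    (univ.filter fun z => Q (q z) ∧ R z).card
      = ∑ a ∈ univ.filter Q, (univ.filter fun z => q z = a ∧ R z).card := by
  classical
  rw [Finset.card_eq_sum_card_fiberwise (f := q) (t := univ.filter Q)
    (fun z hz => by simp only [coe_filter, Set.mem_setOf_eq, mem_filter, mem_univ, true_and] at hz ⊢; exact hz.1)]
  refine Finset.sum_congr rfl fun a ha => ?_
  congr 1
  ext z
  simp only [mem_filter, mem_univ, true_and] at ha ⊢
  constructor
  · rintro ⟨⟨_, hR⟩, hqa⟩; exact ⟨hqa, hR⟩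
  · rintro ⟨hqa, hR⟩; exact ⟨⟨hqa ▸ ha, hR⟩, hqa⟩

/-- Like STATEMENT 13 but with distinct fresh variables `f`, `t`
(modeled as `Sum.inr false`, `Sum.inr true` in `Z ⊕ Bool`), where
`S'(α) = ¬α(f) ∧ α(t) ∧ (α z ≠ α z' whenever p z = p z' and σ z ≠ σ z')` and
`U'(α) = ¬α(f) ∧ α(t) ∧ (α z ≠ α z' whenever q z = q z' and τ z ≠ τ z')`.
Then `S' ⇒̃ U'` iff `A` can be partitioned via `c : A → Fin m` so that each
part has total size `B`. -/
theorem stmt_14 (m B : ℕ) (hm : 1 ≤ m) (hB : 1 ≤ B)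
    {A : Type*} [Fintype A] [DecidableEq A] (s : A → ℕ)
    (hs : ∀ a : A, 1 ≤ s a) (hsum : ∑ a : A, s a = m * B)
    {Z : Type*} [Fintype Z] [DecidableEq Z]
    (p : Z → Fin m) (σ : Z → Bool) (q : Z → A) (τ : Z → Bool)
    (hp : ∀ i : Fin m, ∀ b : Bool, (Finset.univ.filter fun z => p z = i ∧ σ z = b).card = B)
    (hq : ∀ a : A, ∀ b : Bool, (Finset.univ.filter fun z => q z = a ∧ τ z = b).card = s a)
    (S' U' : (Z ⊕ Bool → Bool) → Bool)
    (hS' : ∀ α : Z ⊕ Bool → Bool, S' α = true ↔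
      (α (Sum.inr false) = false ∧ α (Sum.inr true) = true ∧
        ∀ z z' : Z, p z = p z' → σ z ≠ σ z' → α (Sum.inl z) ≠ α (Sum.inl z')))
    (hU' : ∀ α : Z ⊕ Bool → Bool, U' α = true ↔
      (α (Sum.inr false) = false ∧ α (Sum.inr true) = true ∧
        ∀ z z' : Z, q z = q z' → τ z ≠ τ z' → α (Sum.inl z) ≠ α (Sum.inl z'))) :
    (∃ π : Equiv.Perm (Z ⊕ Bool), ∀ α : Z ⊕ Bool → Bool, S' (α ∘ π) = true → U' α = true) ↔
      (∃ c : A → Fin m, ∀ i : Fin m, ∑ a ∈ Finset.univ.filter fun a => c a = i, s a = B) := by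
  classical
  open Finset in
  constructor
  · rintro ⟨π, H⟩
    set αv : (Fin m → Bool) → (Z ⊕ Bool) → Bool :=
      fun v x => Sum.elim (fun z => xor (v (p z)) (σ z)) id x with hαv
    have hSv : ∀ v, S' (αv v) = true := by
      intro v
      rw [hS']
      refine ⟨rfl, rfl, fun z z' hpe hσ => ?_⟩
      simp only [αv, Sum.elim_inl, hpe]
      cases hzz : σ z <;> cases hzz' : σ z' <;> simp_all <;> cases v (p z') <;> simp
    have HU : ∀ v, U' (αv v ∘ ⇑π.symm) = true := by
      intro v
      apply H
      have hc : (αv v ∘ ⇑π.symm) ∘ ⇑π = αv v := by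
        funext x; simp
      rw [hc]; exact hSv v
    have F1 : ∀ v, αv v (π.symm (Sum.inr false)) = false := fun v => ((hU' _).mp (HU v)).1
    have F2 : ∀ v, αv v (π.symm (Sum.inr true)) = true := fun v => ((hU' _).mp (HU v)).2.1
    have F3 : ∀ v (z z' : Z), q z = q z' → τ z ≠ τ z' →
        αv v (π.symm (Sum.inl z)) ≠ αv v (π.symm (Sum.inl z')) :=
      fun v => ((hU' _).mp (HU v)).2.2
    have hf : π.symm (Sum.inr false) = Sum.inr false := by
      rcases hx : π.symm (Sum.inr false) with z | b
      · have h1 := F1 (fun _ => !(σ z))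
        rw [hx] at h1
        simp only [αv, Sum.elim_inl] at h1
        cases hσz : σ z <;> simp [hσz] at h1
      · have h1 := F1 (fun _ => false)
        rw [hx] at h1
        simp only [αv, Sum.elim_inr, id] at h1
        rw [h1]
    have ht : π.symm (Sum.inr true) = Sum.inr true := by
      rcases hx : π.symm (Sum.inr true) with z | b
      · have h1 := F2 (fun _ => σ z)
        rw [hx] at h1
        simp only [αv, Sum.elim_inl] at h1
        simp at h1
      · have h1 := F2 (fun _ => false)
        rw [hx] at h1
        simp only [αv, Sum.elim_inr, id] at h1
        rw [h1]
    have hinl : ∀ z : Z, ∃ w, π.symm (Sum.inl z) = Sum.inl w := by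
      intro z
      rcases hx : π.symm (Sum.inl z) with w | b
      · exact ⟨w, rfl⟩
      · cases b
        · exact absurd (π.symm.injective (hx.trans hf.symm)) (by simp)
        · exact absurd (π.symm.injective (hx.trans ht.symm)) (by simp)
    choose h hh using hinl
    have hinj : Function.Injective h := by
      intro z z' he
      have : π.symm (Sum.inl z) = π.symm (Sum.inl z') := by rw [hh, hh, he]
      simpa using π.symm.injective this
    have hsurj : Function.Surjective h := Finite.surjective_of_injective hinj
    have Kp : ∀ z z', q z = q z' → τ z ≠ τ z' → p (h z) = p (h z') := by
      intro z z' hqe hτ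
      by_contra hne
      have h3 := F3 (fun x => if x = p (h z) then σ (h z) else σ (h z')) z z' hqe hτ
      rw [hh, hh] at h3
      simp only [αv, Sum.elim_inl] at h3
      rw [if_neg (fun hc : p (h z') = p (h z) => hne hc.symm)] at h3
      simp at h3
    have hza : ∀ (a : A) (b : Bool), ∃ z, q z = a ∧ τ z = b := by
      intro a b
      have hpos : 0 < (univ.filter fun z => q z = a ∧ τ z = b).card := by
        rw [hq]; exact hs a
      obtain ⟨z, hz⟩ := Finset.card_pos.mp hpos
      simp only [mem_filter] at hz
      exact ⟨z, hz.2⟩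
    choose z0 hz0q hz0τ using fun a => hza a false
    choose z1 hz1q hz1τ using fun a => hza a true
    set c : A → Fin m := fun a => p (h (z0 a)) with hcdef
    have claim : ∀ z, p (h z) = c (q z) := by
      intro z
      cases hτz : τ z
      · have h1 : p (h z) = p (h (z1 (q z))) :=
          Kp _ _ (hz1q (q z)).symm (by rw [hτz, hz1τ]; simp)
        have h2 : p (h (z0 (q z))) = p (h (z1 (q z))) :=
          Kp _ _ (by rw [hz0q, hz1q]) (by rw [hz0τ, hz1τ]; simp)
        rw [h1, ← h2]
      · exact Kp _ _ (hz0q (q z)).symm (by rw [hτz, hz0τ]; simp)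
    refine ⟨c, fun i => ?_⟩
    have e1 : (univ.filter fun w => p w = i).card = 2 * B := by
      rw [stmt14_split_card (fun w => p w = i) σ, hp i false, hp i true, two_mul]
    have e2 : (univ.filter fun z => c (q z) = i).card = (univ.filter fun w => p w = i).card := by
      have hfe : (univ.filter fun z => c (q z) = i) = (univ.filter fun z => p (h z) = i) := by
        ext z; simp [claim z]
      rw [hfe]
      apply Finset.card_bij (fun z _ => h z)
      · intro z hz; simp only [mem_filter, mem_univ, true_and] at *; exact hz
      · intro z _ z' _ he; exact hinj he
      · intro w hw
        obtain ⟨z, rfl⟩ := hsurj w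
        exact ⟨z, by simpa using hw, rfl⟩
    have e3 : (univ.filter fun z => c (q z) = i).card
        = ∑ a ∈ univ.filter (fun a => c a = i), 2 * s a := by
      have hfc := stmt14_fiber_card q (fun a => c a = i) (fun _ => True)
      simp only [and_true] at hfc
      rw [hfc]
      refine Finset.sum_congr rfl fun a _ => ?_
      rw [stmt14_split_card (fun z => q z = a) τ, hq a false, hq a true, two_mul]
    refine (Nat.eq_of_mul_eq_mul_left (show 0 < 2 by norm_num) ?_).symm
    rw [Finset.mul_sum, ← e3, e2, e1]
  · rintro ⟨c, hc⟩
    have key : ∀ (i : Fin m) (b : Bool),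
        (univ.filter fun z => c (q z) = i ∧ τ z = b).card = B := by
      intro i b
      rw [stmt14_fiber_card q (fun a => c a = i) (fun z => τ z = b)]
      rw [Finset.sum_congr rfl fun a _ => hq a b]
      exact hc i
    set k1 : Z → Fin m × Bool := fun z => (c (q z), τ z) with hk1
    set k2 : Z → Fin m × Bool := fun z => (p z, σ z) with hk2
    have hcard : ∀ y : Fin m × Bool, Fintype.card {z // k1 z = y} = Fintype.card {z // k2 z = y} := by
      rintro ⟨i, b⟩
      rw [Fintype.card_subtype, Fintype.card_subtype]
      have h1 : (univ.filter fun z => k1 z = (i, b)) = (univ.filter fun z => c (q z) = i ∧ τ z = b) := by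
        ext z; simp [hk1, Prod.ext_iff]
      have h2 : (univ.filter fun z => k2 z = (i, b)) = (univ.filter fun z => p z = i ∧ σ z = b) := by
        ext z; simp [hk2, Prod.ext_iff]
      rw [h1, h2, key, hp]
    set e : ∀ y, {z // k1 z = y} ≃ {z // k2 z = y} := fun y => Fintype.equivOfCardEq (hcard y) with he
    set g : Z ≃ Z :=
      (Equiv.sigmaFiberEquiv k1).symm.trans ((Equiv.sigmaCongrRight e).trans (Equiv.sigmaFiberEquiv k2)) with hg
    have hgk : ∀ z, k2 (g z) = k1 z := fun z => (e (k1 z) ⟨z, rfl⟩).2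
    refine ⟨Equiv.sumCongr g.symm (Equiv.refl Bool), fun α hα => ?_⟩
    rw [hS'] at hα
    rw [hU']
    obtain ⟨h1, h2, h3⟩ := hα
    refine ⟨h1, h2, fun z z' hqe hτ => ?_⟩
    have hpz : p (g z) = c (q z) := congrArg Prod.fst (hgk z)
    have hpz' : p (g z') = c (q z') := congrArg Prod.fst (hgk z')
    have hσz : σ (g z) = τ z := congrArg Prod.snd (hgk z)
    have hσz' : σ (g z') = τ z' := congrArg Prod.snd (hgk z')
    have h4 := h3 (g z) (g z') (by rw [hpz, hpz', hqe]) (by rw [hσz, hσz']; exact hτ)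
    simpa using h4
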